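/- Let n ≥ 0 be an integer and let h ∈ K_∞⟨t⟩ with ‖h‖ < 1. Then the series s_h := h + ∑_{i=1}^∞ h^{(i)} · ∏_{j=0}^{i−1} (t−θ^{q^j})^{−n} converges in K_∞⟨t⟩, and s_h satisfies s_h − (t−θ)^{−n} s_h^{(1)} = h. -/

import Mathlib

open scoped Classical ENNReal
open Filter

noncomputable section

namespace Carlitz

variable (F : Type) [Field F] [Fintype F]

/-- `K∞ = 𝔽((1/θ))`, realized as the field of formal Laurent series over `F`;
the Laurent-series variable plays the role of `1/θ`. -/
abbrev Kinf := LaurentSeries F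

/-- `θ ∈ K∞`, the inverse of the Laurent-series variable. -/
def theta : Kinf F := HahnSeries.single (-1 : ℤ) (1 : F)

/-- The absolute value `|x| = q ^ (deg_θ x)`, with values in `ℝ≥0∞`. -/
def Kabs {R : Type} [Zero R] (q : ℕ) (x : HahnSeries ℤ R) : ℝ≥0∞ :=
  if x = 0 then 0 else (q : ℝ≥0∞) ^ (-x.order)

/-- The ambient ring of the Tate algebra: formal power series in `t` over `K∞`. -/
abbrev TS := PowerSeries (Kinf F)

/-- The `i`-th `t`-coefficient. -/
def coeffT (i : ℕ) (f : TS F) : Kinf F := PowerSeries.coeff i f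

/-- Membership in the Tate algebra `K∞⟨t⟩`: the coefficients tend to `0`. -/
def IsTate (f : TS F) : Prop :=
  Tendsto (fun i => Kabs (Fintype.card F) (coeffT F i f)) atTop (nhds 0)

/-- The Gauss norm `‖f‖ = sup_i |a_i|`. -/
def gnorm (f : TS F) : ℝ≥0∞ := ⨆ i, Kabs (Fintype.card F) (coeffT F i f)

/-- The twist `f ↦ f⁽¹⁾`: the coefficientwise `q`-power Frobenius. -/
def twist (f : TS F) : TS F := PowerSeries.mk fun i => coeffT F i f ^ Fintype.card F

/-- The iterated twist `f ↦ f⁽ᵏ⁾`. -/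
def twistIter (k : ℕ) (f : TS F) : TS F := (twist F)^[k] f

/-- The variable `t` of the Tate algebra. -/
def tt : TS F := PowerSeries.X

/-- `θ`, viewed as a constant of `K∞⟨t⟩`. -/
def th : TS F := PowerSeries.C (R := Kinf F) (theta F)

/-- The embedding `𝔽[θ] → K∞` sending the polynomial variable to `θ`. -/
def polyK : Polynomial F →+* Kinf F :=
  Polynomial.eval₂RingHom (HahnSeries.C : F →+* Kinf F) (theta F)

/-- The embedding `𝔽[θ][t] → K∞⟨t⟩`: the outer variable goes to `t`,
the inner variable goes to `θ`. -/
def polyT : Polynomial (Polynomial F) →+* TS F :=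
  Polynomial.eval₂RingHom ((PowerSeries.C (R := Kinf F)).comp (polyK F)) PowerSeries.X

/-- The subring `𝔽[θ,t] ⊆ K∞⟨t⟩`. -/
def PolyTT : Set (TS F) := Set.range (polyT F)

/-- The subset of `𝔽[θ,t]` of elements of `θ`-degree `< n`. -/
def PolyDegLt (n : ℕ) : Set (TS F) :=
  {f | ∃ P : Polynomial (Polynomial F), (∀ i, (P.coeff i).degree < (n : ℕ)) ∧ f = polyT F P}

/-- The action of `𝔽[t]` on `K∞⟨t⟩`: `a • f` is `actT a * f`. -/
def actT : Polynomial F →+* TS F :=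
  Polynomial.eval₂RingHom ((PowerSeries.C (R := Kinf F)).comp (HahnSeries.C : F →+* Kinf F))
    PowerSeries.X

/-- Convergence in `K∞⟨t⟩` with respect to the Gauss norm:
`L` is the limit of the sequence `s`. -/
def TT (s : ℕ → TS F) (L : TS F) : Prop :=
  Tendsto (fun N => gnorm F (L - s N)) atTop (nhds 0)

/-- Convergence in `K∞`: `L` is the limit of the sequence `s`. -/
def KT (q : ℕ) (s : ℕ → Kinf F) (L : Kinf F) : Prop :=
  Tendsto (fun N => Kabs q (L - s N)) atTop (nhds 0)

/-- Partial products defining `ν_n = (−θ)^{−h} ∏_{j≥0} (1 − t·θ^{−qʲ})ⁿ`,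
where `n = h(q−1) + δ`. -/
def nuPartial (n h N : ℕ) : TS F :=
  PowerSeries.C (R := Kinf F) ((-theta F)⁻¹ ^ h) *
    ∏ j ∈ Finset.range N,
      (1 - tt F * PowerSeries.C (R := Kinf F) ((theta F)⁻¹ ^ Fintype.card F ^ j)) ^ n

/-- Partial products defining `ω_n = (−θ)^m ∏_{i≥0} (1 − t·θ^{−qⁱ})^{−n}`,
where `n = m(q−1)`; `ω_n` is the `n`-th power of the Anderson–Thakur function. -/
def omegaPartial (n m N : ℕ) : TS F :=
  PowerSeries.C (R := Kinf F) ((-theta F) ^ m) *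
    ∏ i ∈ Finset.range N,
      ((1 - tt F * PowerSeries.C (R := Kinf F) ((theta F)⁻¹ ^ Fintype.card F ^ i)) ^ n)⁻¹

/-- Partial sums defining `ξ_e = ∑_{k≥0} e⁽ᵏ⁾ ∏_{i=0}^{k} (t−θ^{qⁱ})^{−n}`. -/
def xiPartial (n : ℕ) (e : TS F) (N : ℕ) : TS F :=
  ∑ k ∈ Finset.range N, twistIter F k e *
    (∏ i ∈ Finset.range (k + 1),
      (tt F - PowerSeries.C (R := Kinf F) (theta F ^ Fintype.card F ^ i)) ^ n)⁻¹

/-- Partial sums defining `s_h = h + ∑_{i≥1} h⁽ⁱ⁾ ∏_{j=0}^{i−1} (t−θ^{qʲ})^{−n}`. -/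
def sPartial (n : ℕ) (h : TS F) (N : ℕ) : TS F :=
  ∑ i ∈ Finset.range N, twistIter F i h *
    (∏ j ∈ Finset.range i,
      (tt F - PowerSeries.C (R := Kinf F) (theta F ^ Fintype.card F ^ j)) ^ n)⁻¹

/-- The map `β : f ↦ f − (t−θ)ⁿ f⁽¹⁾`. -/
def beta (n : ℕ) (f : TS F) : TS F := f - (tt F - th F) ^ n * twist F f

/-- The set of integral extension representatives
`X_n = {ξ ∈ K∞⟨t⟩ : (t−θ)ⁿ ξ − ξ⁽¹⁾ ∈ 𝔽[θ,t]}`. -/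
def Xset (n : ℕ) : Set (TS F) :=
  {ξ | IsTate F ξ ∧ (tt F - th F) ^ n * ξ - twist F ξ ∈ PolyTT F}

/-! ### Auxiliary development -/

section Aux
set_option linter.unusedSectionVars false

variable {F}

/-! #### Cardinality facts -/

lemma cardF_two_le : 2 ≤ Fintype.card F := Fintype.one_lt_card

lemma cardE_one_lt : (1 : ℝ≥0∞) < (Fintype.card F : ℝ≥0∞) := by
  exact_mod_cast (Fintype.one_lt_card : 1 < Fintype.card F)

lemma cardE_one_le : (1 : ℝ≥0∞) ≤ (Fintype.card F : ℝ≥0∞) := le_of_lt cardE_one_lt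

lemma cardE_ne_zero : (Fintype.card F : ℝ≥0∞) ≠ 0 := by
  exact_mod_cast Fintype.card_ne_zero

lemma cardE_ne_top : (Fintype.card F : ℝ≥0∞) ≠ ⊤ := ENNReal.natCast_ne_top _

lemma lt_card_pow (i : ℕ) : i < Fintype.card F ^ i :=
  lt_of_lt_of_le (Nat.lt_two_pow_self) (Nat.pow_le_pow_left cardF_two_le i)

/-! #### The order predicate `HD` on Laurent series -/

/-- `HD m a` means all coefficients of `a` below degree `m` vanish, i.e. `order a ≥ m`. -/
def HD (m : ℤ) (a : Kinf F) : Prop := ∀ g : ℤ, g < m → a.coeff g = 0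

lemma HD.mono {m m' : ℤ} {a : Kinf F} (ha : HD m a) (h : m' ≤ m) : HD m' a :=
  fun g hg => ha g (lt_of_lt_of_le hg h)

lemma HD_zero (m : ℤ) : HD m (0 : Kinf F) := fun _ _ => rfl

lemma HD.add {m : ℤ} {a b : Kinf F} (ha : HD m a) (hb : HD m b) : HD m (a + b) :=
  fun g hg => by rw [HahnSeries.coeff_add, ha g hg, hb g hg, add_zero]

lemma HD.neg {m : ℤ} {a : Kinf F} (ha : HD m a) : HD m (-a) :=
  fun g hg => by rw [HahnSeries.coeff_neg, ha g hg, neg_zero]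

lemma HD.sub {m : ℤ} {a b : Kinf F} (ha : HD m a) (hb : HD m b) : HD m (a - b) := by
  rw [sub_eq_add_neg]; exact ha.add hb.neg

lemma HD_sum {m : ℤ} {α : Type*} {s : Finset α} {f : α → Kinf F}
    (h : ∀ i ∈ s, HD m (f i)) : HD m (∑ i ∈ s, f i) := by
  classical
  induction s using Finset.cons_induction with
  | empty => simpa using HD_zero m
  | cons a s ha ih =>
    rw [Finset.sum_cons]
    exact (h _ (Finset.mem_cons_self _ _)).add (ih fun i hi => h i (Finset.mem_cons_of_mem hi))

lemma HD.mul {m m' : ℤ} {a b : Kinf F} (ha : HD m a) (hb : HD m' b) : HD (m + m') (a * b) := by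
  intro g hg
  rw [HahnSeries.coeff_mul]
  refine Finset.sum_eq_zero fun ij hij => ?_
  obtain ⟨-, -, hsum⟩ := Finset.mem_addAntidiagonal.mp hij
  rcases lt_or_ge ij.1 m with h1 | h1
  · rw [ha _ h1, zero_mul]
  · rw [hb _ (by omega), mul_zero]

lemma HD_single {m g : ℤ} (h : m ≤ g) (r : F) : HD m (HahnSeries.single g r) :=
  fun _ hg' => HahnSeries.coeff_single_of_ne (by omega)

lemma HD_one : HD 0 (1 : Kinf F) := by
  rw [← HahnSeries.single_zero_one]; exact HD_single le_rfl 1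

/-- `order a ≥ 1` implies `order (a^e) ≥ e`. -/
lemma HD.pow_self {a : Kinf F} (ha : HD 1 a) (e : ℕ) : HD e (a ^ e) := by
  induction e with
  | zero => simpa using HD_one
  | succ e ih =>
    rw [pow_succ]
    have := ih.mul ha
    exact this.mono (by push_cast; omega)

/-- `order a ≥ m ≥ 0` implies `order (a^e) ≥ m` for `e ≥ 1`. -/
lemma HD.pow_keep {m : ℤ} {a : Kinf F} (ha : HD m a) (hm : 0 ≤ m) {e : ℕ} (he : e ≠ 0) :
    HD m (a ^ e) := by
  induction e with
  | zero => omega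
  | succ e ih =>
    rcases Nat.eq_zero_or_pos e with rfl | he'
    · simpa using ha
    · rw [pow_succ]
      exact ((ih (by omega)).mul ha).mono (by omega)

/-! #### The order predicate `Dge` on the Tate algebra -/

/-- `Dge m f` means every `t`-coefficient of `f` has order at least `m`. -/
def Dge (m : ℤ) (f : TS F) : Prop := ∀ k : ℕ, HD m (coeffT F k f)

lemma coeffT_add (k : ℕ) (f g : TS F) : coeffT F k (f + g) = coeffT F k f + coeffT F k g := by
  simp [coeffT]

lemma coeffT_sub (k : ℕ) (f g : TS F) : coeffT F k (f - g) = coeffT F k f - coeffT F k g := by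
  simp [coeffT]

lemma coeffT_sum {α : Type*} (k : ℕ) (s : Finset α) (f : α → TS F) :
    coeffT F k (∑ i ∈ s, f i) = ∑ i ∈ s, coeffT F k (f i) := by
  simp [coeffT]

lemma hcoeff_sum {α : Type*} (s : Finset α) (f : α → Kinf F) (g : ℤ) :
    (∑ i ∈ s, f i).coeff g = ∑ i ∈ s, (f i).coeff g := by
  classical
  induction s using Finset.cons_induction with
  | empty => simp
  | cons a s ha ih => rw [Finset.sum_cons, Finset.sum_cons, HahnSeries.coeff_add, ih]

lemma Dge.mono {m m' : ℤ} {f : TS F} (hf : Dge m f) (h : m' ≤ m) : Dge m' f :=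
  fun k => (hf k).mono h

lemma Dge.add {m : ℤ} {f g : TS F} (hf : Dge m f) (hg : Dge m g) : Dge m (f + g) :=
  fun k => by rw [coeffT_add]; exact (hf k).add (hg k)

lemma Dge.sub {m : ℤ} {f g : TS F} (hf : Dge m f) (hg : Dge m g) : Dge m (f - g) :=
  fun k => by rw [coeffT_sub]; exact (hf k).sub (hg k)

lemma Dge_sum {m : ℤ} {α : Type*} {s : Finset α} {f : α → TS F}
    (h : ∀ i ∈ s, Dge m (f i)) : Dge m (∑ i ∈ s, f i) := by
  intro k
  rw [coeffT_sum]
  exact HD_sum fun i hi => h i hi k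

lemma Dge.mul {m m' : ℤ} {f g : TS F} (hf : Dge m f) (hg : Dge m' g) : Dge (m + m') (f * g) := by
  intro k
  have : coeffT F k (f * g) = ∑ p ∈ Finset.HasAntidiagonal.antidiagonal k, coeffT F p.1 f * coeffT F p.2 g :=
    PowerSeries.coeff_mul k f g
  rw [this]
  exact HD_sum fun p _ => (hf p.1).mul (hg p.2)

lemma Dge_one : Dge 0 (1 : TS F) := by
  intro k
  show HD 0 (PowerSeries.coeff k 1)
  rw [PowerSeries.coeff_one]
  split
  · exact HD_one
  · exact HD_zero 0

lemma Dge.pow0 {f : TS F} (hf : Dge 0 f) (e : ℕ) : Dge 0 (f ^ e) := by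
  induction e with
  | zero => simpa using Dge_one
  | succ e ih => rw [pow_succ]; simpa using ih.mul hf

lemma Dge_prod0 {α : Type*} {s : Finset α} {f : α → TS F}
    (h : ∀ i ∈ s, Dge 0 (f i)) : Dge 0 (∏ i ∈ s, f i) := by
  classical
  induction s using Finset.cons_induction with
  | empty => simpa using Dge_one
  | cons a s ha ih =>
    rw [Finset.prod_cons]
    have := (h _ (Finset.mem_cons_self _ _)).mul (ih fun i hi => h i (Finset.mem_cons_of_mem hi))
    simpa using this

/-! #### The predicate `Lin`: the `k`-th coefficient has order `≥ k` -/

def Lin (f : TS F) : Prop := ∀ k : ℕ, HD k (coeffT F k f)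

lemma Lin.mul {f g : TS F} (hf : Lin f) (hg : Lin g) : Lin (f * g) := by
  intro k
  have : coeffT F k (f * g) = ∑ p ∈ Finset.HasAntidiagonal.antidiagonal k, coeffT F p.1 f * coeffT F p.2 g :=
    PowerSeries.coeff_mul k f g
  rw [this]
  refine HD_sum fun p hp => ?_
  have hsum : p.1 + p.2 = k := Finset.HasAntidiagonal.mem_antidiagonal.mp hp
  have := (hf p.1).mul (hg p.2)
  exact this.mono (by omega)

lemma Lin_one : Lin (1 : TS F) := by
  intro k
  show HD _ (PowerSeries.coeff k 1)
  rw [PowerSeries.coeff_one]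
  split
  · next hk => subst hk; exact_mod_cast HD_one
  · exact HD_zero _

lemma Lin.pow {f : TS F} (hf : Lin f) (e : ℕ) : Lin (f ^ e) := by
  induction e with
  | zero => simpa using Lin_one
  | succ e ih => rw [pow_succ]; exact ih.mul hf

lemma Lin_prod {α : Type*} {s : Finset α} {f : α → TS F}
    (h : ∀ i ∈ s, Lin (f i)) : Lin (∏ i ∈ s, f i) := by
  classical
  induction s using Finset.cons_induction with
  | empty => simpa using Lin_one
  | cons a s ha ih =>
    rw [Finset.prod_cons]
    exact (h _ (Finset.mem_cons_self _ _)).mul (ih fun i hi => h i (Finset.mem_cons_of_mem hi))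

end Aux
section Aux2
set_option linter.unusedSectionVars false
variable {F}

/-! #### `θ` and the geometric inverses of `t - θ^c` -/

lemma theta_pow (c : ℕ) : theta F ^ c = HahnSeries.single (-(c : ℤ)) (1 : F) := by
  rw [theta, HahnSeries.single_pow, one_pow, nsmul_eq_mul]
  norm_num

variable (F) in
/-- The inverse of `t - θ^c` in `K∞⟨t⟩`. -/
def invFactor (c : ℕ) : TS F :=
  PowerSeries.mk fun k => -(HahnSeries.single ((c : ℤ) * (k + 1)) (1 : F))

lemma factor_mul_invFactor (c : ℕ) :
    (tt F - PowerSeries.C (R := Kinf F) (theta F ^ c)) * invFactor F c = 1 := by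
  refine PowerSeries.ext fun k => ?_
  rw [theta_pow, tt, sub_mul]
  cases k with
  | zero =>
    rw [map_sub, PowerSeries.coeff_zero_eq_constantCoeff, map_mul, map_mul,
      PowerSeries.constantCoeff_X, zero_mul, PowerSeries.constantCoeff_C, invFactor,
      PowerSeries.constantCoeff_mk, zero_sub, PowerSeries.constantCoeff_one]
    have he : (-(c:ℤ)) + (c:ℤ) * (((0:ℕ):ℤ) + 1) = 0 := by push_cast; ring
    have hs0 : HahnSeries.single (-(c:ℤ)) (1:F) *
        HahnSeries.single ((c:ℤ) * (((0:ℕ):ℤ) + 1)) (1:F) = 1 := by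
      rw [HahnSeries.single_mul_single, one_mul, he, HahnSeries.single_zero_one]
    linear_combination hs0
  | succ k =>
    rw [map_sub, PowerSeries.coeff_succ_X_mul, PowerSeries.coeff_C_mul, invFactor,
      PowerSeries.coeff_mk, PowerSeries.coeff_mk, PowerSeries.coeff_one]
    simp only [Nat.succ_ne_zero, if_false]
    have hs : HahnSeries.single (-(c:ℤ)) (1:F) *
        HahnSeries.single ((c:ℤ) * (((k+1:ℕ):ℤ) + 1)) (1:F)
        = HahnSeries.single ((c:ℤ) * (((k:ℕ):ℤ) + 1)) (1:F) := by
      rw [HahnSeries.single_mul_single, one_mul]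
      congr 1
      push_cast; ring
    linear_combination hs

lemma HD0_invFactor_coeff (c k : ℕ) : HD 0 (coeffT F k (invFactor F c)) := by
  show HD 0 (PowerSeries.coeff k (invFactor F c))
  rw [invFactor, PowerSeries.coeff_mk]
  exact (HD_single (by positivity) 1).neg

lemma Dge0_invFactor (c : ℕ) : Dge 0 (invFactor F c) := fun k => HD0_invFactor_coeff c k

lemma Lin_invFactor {c : ℕ} (hc : 1 ≤ c) : Lin (invFactor F c) := by
  intro k
  show HD _ (PowerSeries.coeff k (invFactor F c))
  rw [invFactor, PowerSeries.coeff_mk]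
  refine (HD_single ?_ 1).neg
  have : (k : ℤ) + 0 ≤ (c : ℤ) * (k + 1) := by
    have : (1 : ℤ) ≤ (c : ℤ) := by exact_mod_cast hc
    nlinarith
  omega

/-- Uniqueness of inverses in `K∞⟦t⟧`. -/
lemma psInv_eq {a b : TS F} (hab : a * b = 1) : a⁻¹ = b := by
  have h0 : PowerSeries.constantCoeff (R := Kinf F) a ≠ 0 := by
    refine left_ne_zero_of_mul_eq_one (b := PowerSeries.constantCoeff (R := Kinf F) b) ?_
    rw [← map_mul, hab, map_one]
  rw [PowerSeries.inv_eq_iff_mul_eq_one h0, mul_comm]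
  exact hab

variable (F) in
/-- `Rprod n i = ∏_{j<i} (t - θ^{q^j})^{-n}`, written with explicit inverses. -/
def Rprod (n i : ℕ) : TS F :=
  ∏ j ∈ Finset.range i, invFactor F (Fintype.card F ^ j) ^ n

lemma Q_mul_R (n i : ℕ) :
    (∏ j ∈ Finset.range i,
      (tt F - PowerSeries.C (R := Kinf F) (theta F ^ Fintype.card F ^ j)) ^ n) * Rprod F n i = 1 := by
  rw [Rprod, ← Finset.prod_mul_distrib]
  exact Finset.prod_eq_one fun j _ => by
    rw [← mul_pow, factor_mul_invFactor, one_pow]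

lemma Qinv_eq (n i : ℕ) :
    (∏ j ∈ Finset.range i,
      (tt F - PowerSeries.C (R := Kinf F) (theta F ^ Fintype.card F ^ j)) ^ n)⁻¹ = Rprod F n i :=
  psInv_eq (Q_mul_R n i)

variable (F) in
/-- The `i`-th term of the series defining `s_h`. -/
def Tterm (n : ℕ) (h : TS F) (i : ℕ) : TS F := twistIter F i h * Rprod F n i

lemma sPartial_eq (n : ℕ) (h : TS F) (N : ℕ) :
    sPartial F n h N = ∑ i ∈ Finset.range N, Tterm F n h i := by
  unfold sPartial
  exact Finset.sum_congr rfl fun i _ => by rw [Tterm, Qinv_eq]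

/-! #### Frobenius and the twist -/

lemma frob_add (x y : Kinf F) :
    (x + y) ^ Fintype.card F = x ^ Fintype.card F + y ^ Fintype.card F := by
  obtain ⟨m, hp, hc⟩ := FiniteField.card F (ringChar F)
  haveI : Fact (Nat.Prime (ringChar F)) := ⟨hp⟩
  haveI : CharP (Kinf F) (ringChar F) :=
    charP_of_injective_ringHom (f := (HahnSeries.C : F →+* Kinf F)) HahnSeries.C_injective _
  rw [hc]
  exact add_pow_char_pow x y _ _

lemma frob_neg_one : ((-1 : Kinf F)) ^ Fintype.card F = -1 := by
  obtain ⟨m, hp, hc⟩ := FiniteField.card F (ringChar F)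
  haveI : Fact (Nat.Prime (ringChar F)) := ⟨hp⟩
  haveI : CharP (Kinf F) (ringChar F) :=
    charP_of_injective_ringHom (f := (HahnSeries.C : F →+* Kinf F)) HahnSeries.C_injective _
  rw [hc]
  exact neg_one_pow_char_pow (Kinf F) _ (p := ringChar F)

variable (F) in
/-- The `q`-power Frobenius of `K∞` as a ring homomorphism. -/
def phiF : Kinf F →+* Kinf F where
  toFun x := x ^ Fintype.card F
  map_one' := one_pow _
  map_mul' x y := mul_pow x y _
  map_zero' := zero_pow Fintype.card_ne_zero
  map_add' := frob_add

lemma twist_eq_map (f : TS F) : twist F f = PowerSeries.map (phiF F) f := by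
  ext k
  simp [twist, coeffT, phiF, PowerSeries.coeff_map, PowerSeries.coeff_mk]

lemma twist_mul (f g : TS F) : twist F (f * g) = twist F f * twist F g := by
  simp only [twist_eq_map, map_mul]

lemma twist_sub (f g : TS F) : twist F (f - g) = twist F f - twist F g := by
  simp only [twist_eq_map, map_sub]

lemma coeffT_twist (k : ℕ) (f : TS F) :
    coeffT F k (twist F f) = coeffT F k f ^ Fintype.card F := by
  simp [twist, coeffT, PowerSeries.coeff_mk]

lemma twistIter_succ (i : ℕ) (f : TS F) :
    twistIter F (i + 1) f = twist F (twistIter F i f) := by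
  rw [twistIter, twistIter, Function.iterate_succ_apply']

lemma twistIter_zero (f : TS F) : twistIter F 0 f = f := rfl

lemma coeffT_twistIter (i k : ℕ) (f : TS F) :
    coeffT F k (twistIter F i f) = coeffT F k f ^ Fintype.card F ^ i := by
  induction i with
  | zero => simp [twistIter_zero]
  | succ i ih =>
    rw [twistIter_succ, coeffT_twist, ih, ← pow_mul, ← pow_succ]

lemma twist_invFactor (c : ℕ) :
    twist F (invFactor F c) = invFactor F (Fintype.card F * c) := by
  refine PowerSeries.ext fun k => ?_
  have h1 : PowerSeries.coeff k (twist F (invFactor F c))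
      = (PowerSeries.coeff k (invFactor F c)) ^ Fintype.card F := coeffT_twist k _
  rw [h1, invFactor, invFactor, PowerSeries.coeff_mk, PowerSeries.coeff_mk]
  have he : (Fintype.card F) • ((c:ℤ) * ((k:ℤ) + 1))
      = ((Fintype.card F * c : ℕ) : ℤ) * ((k:ℤ) + 1) := by
    rw [nsmul_eq_mul]; push_cast; ring
  rw [show -(HahnSeries.single ((c:ℤ) * ((k:ℤ) + 1)) (1:F))
        = -1 * HahnSeries.single ((c:ℤ) * ((k:ℤ) + 1)) (1:F) from by ring,
    mul_pow, frob_neg_one, HahnSeries.single_pow, one_pow, he]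
  ring_nf

end Aux2
section Aux3
set_option linter.unusedSectionVars false
variable {F}

/-! #### Norm estimates -/

lemma Kabs_zero' : Kabs (Fintype.card F) (0 : Kinf F) = 0 := if_pos rfl

lemma Kabs_le_of_HD {m : ℤ} {x : Kinf F} (hx : HD m x) :
    Kabs (Fintype.card F) x ≤ (Fintype.card F : ℝ≥0∞) ^ (-m) := by
  unfold Kabs
  split
  · exact zero_le
  · next h0 =>
    refine ENNReal.zpow_le_of_le cardE_one_le (neg_le_neg ?_)
    by_contra hc
    exact (mt HahnSeries.coeff_order_eq_zero.mp h0) (hx _ (not_le.mp hc))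

lemma Kabs_le_one_of_HD0 {x : Kinf F} (hx : HD 0 x) : Kabs (Fintype.card F) x ≤ 1 := by
  have := Kabs_le_of_HD hx
  rwa [neg_zero, zpow_zero] at this

lemma HD_one_of_Kabs_lt_one {x : Kinf F} (hx : Kabs (Fintype.card F) x < 1) : HD 1 x := by
  intro g hg
  by_contra hc
  have hx0 : x ≠ 0 := HahnSeries.ne_zero_of_coeff_ne_zero hc
  have hord : x.order ≤ g := HahnSeries.order_le_of_coeff_ne_zero hc
  have : (1 : ℝ≥0∞) ≤ Kabs (Fintype.card F) x := by
    unfold Kabs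
    rw [if_neg hx0]
    calc (1:ℝ≥0∞) = (Fintype.card F : ℝ≥0∞) ^ (0:ℤ) := (zpow_zero _).symm
    _ ≤ (Fintype.card F : ℝ≥0∞) ^ (-x.order) := ENNReal.zpow_le_of_le cardE_one_le (by omega)
  exact absurd hx (not_lt.mpr this)

lemma Kabs_add_le (x y : Kinf F) :
    Kabs (Fintype.card F) (x + y) ≤
      max (Kabs (Fintype.card F) x) (Kabs (Fintype.card F) y) := by
  by_cases hxy : x + y = 0
  · rw [hxy, Kabs_zero']; exact zero_le
  by_cases hx : x = 0
  · rw [hx, zero_add]; exact le_max_right _ _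
  by_cases hy : y = 0
  · rw [hy, add_zero]; exact le_max_left _ _
  have hmin := HahnSeries.min_order_le_order_add hxy
  unfold Kabs
  rw [if_neg hxy, if_neg hx, if_neg hy]
  rcases min_le_iff.mp hmin with h | h
  · exact le_max_of_le_left (ENNReal.zpow_le_of_le cardE_one_le (by omega))
  · exact le_max_of_le_right (ENNReal.zpow_le_of_le cardE_one_le (by omega))

lemma Kabs_mul_le (x y : Kinf F) :
    Kabs (Fintype.card F) (x * y) ≤
      Kabs (Fintype.card F) x * Kabs (Fintype.card F) y := by
  by_cases hx : x = 0
  · rw [hx, zero_mul, Kabs_zero', zero_mul]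
  by_cases hy : y = 0
  · rw [hy, mul_zero, Kabs_zero', mul_zero]
  have hxy : x * y ≠ 0 := mul_ne_zero hx hy
  unfold Kabs
  rw [if_neg hxy, if_neg hx, if_neg hy, HahnSeries.order_mul hx hy,
    ← ENNReal.zpow_add cardE_ne_zero cardE_ne_top]
  exact le_of_eq (congrArg _ (by ring))

lemma Kabs_sum_le {α : Type*} {s : Finset α} {f : α → Kinf F} {c : ℝ≥0∞}
    (h : ∀ i ∈ s, Kabs (Fintype.card F) (f i) ≤ c) :
    Kabs (Fintype.card F) (∑ i ∈ s, f i) ≤ c := by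
  classical
  induction s using Finset.cons_induction with
  | empty => simp [Kabs_zero']
  | cons a s ha ih =>
    rw [Finset.sum_cons]
    refine le_trans (Kabs_add_le _ _) (max_le (h _ (Finset.mem_cons_self _ _))
      (ih fun i hi => h i (Finset.mem_cons_of_mem hi)))

lemma Kabs_le_gnorm (f : TS F) (k : ℕ) :
    Kabs (Fintype.card F) (coeffT F k f) ≤ gnorm F f :=
  le_iSup (fun i => Kabs (Fintype.card F) (coeffT F i f)) k

lemma gnorm_le_of_Dge {m : ℤ} {f : TS F} (hf : Dge m f) :
    gnorm F f ≤ (Fintype.card F : ℝ≥0∞) ^ (-m) :=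
  iSup_le fun k => Kabs_le_of_HD (hf k)

/-- Choosing `B` with `q^{-B} ≤ ε`. -/
lemma exists_card_zpow_le {ε : ℝ≥0∞} (hε : 0 < ε) :
    ∃ B : ℕ, ∀ b : ℕ, B ≤ b → (Fintype.card F : ℝ≥0∞) ^ (-(b:ℤ)) ≤ ε := by
  have h1 : (Fintype.card F : ℝ≥0∞)⁻¹ < 1 := ENNReal.inv_lt_one.mpr cardE_one_lt
  have h2 := ENNReal.tendsto_pow_atTop_nhds_zero_of_lt_one h1
  have h3 := (ENNReal.tendsto_nhds_zero.mp h2) ε hε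
  rw [Filter.eventually_atTop] at h3
  obtain ⟨B, hB⟩ := h3
  refine ⟨B, fun b hb => ?_⟩
  have he : (Fintype.card F : ℝ≥0∞) ^ (-(b:ℤ)) = ((Fintype.card F : ℝ≥0∞))⁻¹ ^ b := by
    rw [ENNReal.zpow_neg, zpow_natCast, ENNReal.inv_pow]
  rw [he]
  exact hB b hb

/-! #### Stability of `IsTate` -/

lemma IsTate_add {f g : TS F} (hf : IsTate F f) (hg : IsTate F g) : IsTate F (f + g) := by
  have hb : ∀ k, Kabs (Fintype.card F) (coeffT F k (f + g)) ≤
      Kabs (Fintype.card F) (coeffT F k f) + Kabs (Fintype.card F) (coeffT F k g) := by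
    intro k
    rw [coeffT_add]
    exact (Kabs_add_le _ _).trans (max_le le_self_add le_add_self)
  have hlim : Tendsto (fun k => Kabs (Fintype.card F) (coeffT F k f) +
      Kabs (Fintype.card F) (coeffT F k g)) atTop (nhds 0) := by
    simpa using Tendsto.add hf hg
  exact tendsto_of_tendsto_of_tendsto_of_le_of_le tendsto_const_nhds hlim
    (fun k => zero_le) hb

lemma IsTate_zero : IsTate F (0 : TS F) := by
  have : ∀ k, Kabs (Fintype.card F) (coeffT F k (0 : TS F)) = 0 := by
    intro k; simp [coeffT, Kabs_zero']
  unfold IsTate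
  simp only [this]
  exact tendsto_const_nhds

lemma IsTate_sum {α : Type*} {s : Finset α} {f : α → TS F}
    (h : ∀ i ∈ s, IsTate F (f i)) : IsTate F (∑ i ∈ s, f i) := by
  classical
  induction s using Finset.cons_induction with
  | empty => simpa using IsTate_zero
  | cons a s ha ih =>
    rw [Finset.sum_cons]
    exact IsTate_add (h _ (Finset.mem_cons_self _ _)) (ih fun i hi => h i (Finset.mem_cons_of_mem hi))

/-- If `f` is Tate with `‖f‖ ≤ 1` and `g` has `k`-th coefficient of order `≥ k`,
then `f * g` is Tate. -/
lemma IsTate_mul_special {f g : TS F} (hf : IsTate F f) (hf0 : Dge 0 f) (hg : Lin g) :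
    IsTate F (f * g) := by
  unfold IsTate
  rw [ENNReal.tendsto_nhds_zero]
  intro ε hε
  have hfε := (ENNReal.tendsto_nhds_zero.mp hf) ε hε
  rw [Filter.eventually_atTop] at hfε
  obtain ⟨A, hA⟩ := hfε
  obtain ⟨B, hB⟩ := exists_card_zpow_le (F := F) hε
  rw [Filter.eventually_atTop]
  refine ⟨A + B, fun k hk => ?_⟩
  have hco : coeffT F k (f * g) = ∑ p ∈ Finset.HasAntidiagonal.antidiagonal k,
      coeffT F p.1 f * coeffT F p.2 g := PowerSeries.coeff_mul k f g
  rw [hco]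
  refine Kabs_sum_le fun p hp => ?_
  have hsum : p.1 + p.2 = k := Finset.HasAntidiagonal.mem_antidiagonal.mp hp
  refine le_trans (Kabs_mul_le _ _) ?_
  rcases le_or_gt A p.1 with h1 | h1
  · -- first factor small
    have e1 : Kabs (Fintype.card F) (coeffT F p.1 f) ≤ ε := hA p.1 h1
    have e2 : Kabs (Fintype.card F) (coeffT F p.2 g) ≤ 1 :=
      Kabs_le_one_of_HD0 ((hg p.2).mono (by positivity))
    calc _ ≤ ε * 1 := mul_le_mul' e1 e2
    _ = ε := mul_one ε
  · -- second factor small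
    have hp2 : B ≤ p.2 := by omega
    have e1 : Kabs (Fintype.card F) (coeffT F p.1 f) ≤ 1 := Kabs_le_one_of_HD0 (hf0 p.1)
    have e2 : Kabs (Fintype.card F) (coeffT F p.2 g) ≤ ε := by
      refine le_trans (Kabs_le_of_HD (hg p.2)) ?_
      refine le_trans (ENNReal.zpow_le_of_le cardE_one_le (by omega)) (hB p.2 hp2)
    calc _ ≤ 1 * ε := mul_le_mul' e1 e2
    _ = ε := one_mul ε

end Aux3
section Aux4
set_option linter.unusedSectionVars false
variable {F}

/-! #### Order bounds for the terms of the series -/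

lemma Dge_twistIter {h : TS F} (hD : Dge 1 h) (i : ℕ) :
    Dge ((Fintype.card F ^ i : ℕ) : ℤ) (twistIter F i h) := by
  intro k
  rw [show coeffT F k (twistIter F i h) = coeffT F k h ^ Fintype.card F ^ i from
    coeffT_twistIter i k h]
  exact (hD k).pow_self _

lemma Dge0_Rprod (n i : ℕ) : Dge 0 (Rprod F n i) :=
  Dge_prod0 fun j _ => (Dge0_invFactor _).pow0 n

lemma Lin_Rprod (n i : ℕ) : Lin (Rprod F n i) :=
  Lin_prod fun j _ => (Lin_invFactor (Nat.one_le_pow _ _ Fintype.card_pos)).pow n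

lemma Dge_Tterm (n : ℕ) {h : TS F} (hD : Dge 1 h) (i : ℕ) :
    Dge ((Fintype.card F ^ i : ℕ) : ℤ) (Tterm F n h i) := by
  have := (Dge_twistIter hD i).mul (Dge0_Rprod n i)
  rw [Tterm]
  exact this.mono (by omega)

lemma Kabs_pow_le (x : Kinf F) (e : ℕ) :
    Kabs (Fintype.card F) (x ^ e) ≤ Kabs (Fintype.card F) x ^ e := by
  induction e with
  | zero => simpa using Kabs_le_one_of_HD0 HD_one
  | succ e ih =>
    rw [pow_succ, pow_succ]
    exact le_trans (Kabs_mul_le _ _) (mul_le_mul' ih le_rfl)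

lemma IsTate_twistIter {h : TS F} (hT : IsTate F h) (hD : Dge 1 h) (i : ℕ) :
    IsTate F (twistIter F i h) := by
  have hb : ∀ k, Kabs (Fintype.card F) (coeffT F k (twistIter F i h)) ≤
      Kabs (Fintype.card F) (coeffT F k h) := by
    intro k
    rw [show coeffT F k (twistIter F i h) = coeffT F k h ^ Fintype.card F ^ i from
      coeffT_twistIter i k h]
    have h1 : Kabs (Fintype.card F) (coeffT F k h) ≤ 1 :=
      Kabs_le_one_of_HD0 ((hD k).mono (by omega))
    refine (Kabs_pow_le _ _).trans ?_
    exact pow_le_of_le_one (zero_le) h1 (pow_ne_zero i Fintype.card_ne_zero)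
  exact tendsto_of_tendsto_of_tendsto_of_le_of_le tendsto_const_nhds hT
    (fun k => zero_le) hb

lemma IsTate_Tterm (n : ℕ) {h : TS F} (hT : IsTate F h) (hD : Dge 1 h) (i : ℕ) :
    IsTate F (Tterm F n h i) :=
  IsTate_mul_special (IsTate_twistIter hT hD i)
    (fun k => ((Dge_twistIter hD i) k).mono (by positivity)) (Lin_Rprod n i)

end Aux4
section Aux5
set_option linter.unusedSectionVars false
variable {F}

lemma Dge.twist {m : ℤ} {f : TS F} (hf : Dge m f) (hm : 0 ≤ m) : Dge m (twist F f) := by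
  intro k
  rw [coeffT_twist]
  exact (hf k).pow_keep hm Fintype.card_ne_zero

lemma Dge.pow_linear {f : TS F} (hf : Dge (-1) f) (e : ℕ) : Dge (-(e:ℤ)) (f ^ e) := by
  induction e with
  | zero => simpa using Dge_one.mono (by omega)
  | succ e ih =>
    rw [pow_succ]
    exact (ih.mul hf).mono (by push_cast; omega)

/-! #### Construction of the limit `s` -/

variable (F) in
/-- The sum of the series `∑ᵢ h⁽ⁱ⁾ ∏_{j<i} (t-θ^{qʲ})^{-n}`, constructed coefficientwise. -/
def sLim (n : ℕ) (h : TS F) (hD : Dge 1 h) : TS F :=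
  PowerSeries.mk fun k =>
    { coeff := fun g => ∑ i ∈ Finset.range (g.toNat + 1), (coeffT F k (Tterm F n h i)).coeff g
      isPWO_support' := by
        refine Set.IsPWO.mono ?_ (?_ : _ ⊆ (fun m : ℕ => (1:ℤ) + m) '' Set.univ)
        · exact ((Set.isWF_univ_iff.mpr ⟨wellFounded_lt⟩).isPWO).image_of_monotone
            (fun a b hab => by omega)
        · intro g hg
          have hg1 : (1:ℤ) ≤ g := by
            by_contra hc
            apply hg
            refine Finset.sum_eq_zero fun i _ => ?_
            refine Dge_Tterm n hD i k g ?_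
            have h1 : (1:ℤ) ≤ ((Fintype.card F ^ i : ℕ) : ℤ) := by
              exact_mod_cast Nat.one_le_pow _ _ Fintype.card_pos
            omega
          exact ⟨(g - 1).toNat, trivial, by
            show (1:ℤ) + ((g - 1).toNat : ℤ) = g
            omega⟩ }

lemma sLim_coeff (n : ℕ) (h : TS F) (hD : Dge 1 h) (k : ℕ) (g : ℤ) :
    (coeffT F k (sLim F n h hD)).coeff g
      = ∑ i ∈ Finset.range (g.toNat + 1), (coeffT F k (Tterm F n h i)).coeff g := by
  simp only [sLim, coeffT, PowerSeries.coeff_mk]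

lemma sLim_coeff_stable (n : ℕ) (h : TS F) (hD : Dge 1 h) (k : ℕ) (g : ℤ) {M : ℕ}
    (hM : g.toNat + 1 ≤ M) :
    (coeffT F k (sLim F n h hD)).coeff g
      = (coeffT F k (sPartial F n h M)).coeff g := by
  rw [sLim_coeff, sPartial_eq, coeffT_sum, hcoeff_sum]
  refine Finset.sum_subset (Finset.range_subset_range.mpr hM) fun i hiM hi => ?_
  have hi' : g.toNat + 1 ≤ i := by simpa using hi
  refine Dge_Tterm n hD i k g ?_
  have h2 : i < Fintype.card F ^ i := lt_card_pow i
  have h3 : g ≤ (g.toNat : ℤ) := Int.self_le_toNat g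
  have h4 : g.toNat < Fintype.card F ^ i := by omega
  have h5 : ((g.toNat : ℤ)) < ((Fintype.card F ^ i : ℕ) : ℤ) := by exact_mod_cast h4
  omega

lemma Dge_sLim_sub (n : ℕ) (h : TS F) (hD : Dge 1 h) (N : ℕ) :
    Dge ((Fintype.card F ^ N : ℕ) : ℤ) (sLim F n h hD - sPartial F n h N) := by
  intro k g hg
  rw [coeffT_sub, HahnSeries.coeff_sub]
  rw [sLim_coeff_stable n h hD k g (le_max_right N (g.toNat + 1))]
  rw [sPartial_eq, sPartial_eq, coeffT_sum, coeffT_sum, hcoeff_sum, hcoeff_sum]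
  rw [← Finset.sum_sdiff (Finset.range_subset_range.mpr (le_max_left N (g.toNat + 1)))]
  rw [add_sub_cancel_right]
  refine Finset.sum_eq_zero fun i hi => ?_
  have hNi : N ≤ i := by
    have := (Finset.mem_sdiff.mp hi).2
    simpa using this
  refine Dge_Tterm n hD i k g ?_
  have h2 : Fintype.card F ^ N ≤ Fintype.card F ^ i :=
    Nat.pow_le_pow_right Fintype.card_pos hNi
  have h5 : ((Fintype.card F ^ N : ℕ) : ℤ) ≤ ((Fintype.card F ^ i : ℕ) : ℤ) := by
    exact_mod_cast h2
  omega

/-! #### The telescoping identity -/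

lemma twist_Tterm (n : ℕ) (h : TS F) (i : ℕ) :
    twist F (Tterm F n h i) = (tt F - th F) ^ n * Tterm F n h (i + 1) := by
  have hfac : (tt F - th F) ^ n * invFactor F 1 ^ n = 1 := by
    rw [← mul_pow]
    have h1 : tt F - th F = tt F - PowerSeries.C (R := Kinf F) (theta F ^ 1) := by rw [pow_one, th]
    rw [h1, factor_mul_invFactor, one_pow]
  have hR : twist F (Rprod F n i)
      = ∏ j ∈ Finset.range i, invFactor F (Fintype.card F ^ (j + 1)) ^ n := by
    rw [Rprod, twist_eq_map, map_prod]
    refine Finset.prod_congr rfl fun j _ => ?_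
    rw [map_pow, ← twist_eq_map, twist_invFactor, ← pow_succ']
  simp only [Tterm]
  rw [twist_mul, ← twistIter_succ, hR, Rprod, Finset.prod_range_succ', pow_zero]
  linear_combination
    (-(twistIter F (i + 1) h *
      ∏ j ∈ Finset.range i, invFactor F (Fintype.card F ^ (j + 1)) ^ n)) * hfac

lemma beta_sPartial (n : ℕ) (h : TS F) (N : ℕ) :
    (tt F - th F) ^ n * sPartial F n h N - twist F (sPartial F n h N)
      = (tt F - th F) ^ n * h - (tt F - th F) ^ n * Tterm F n h N := by
  induction N with
  | zero =>
    have h0 : Tterm F n h 0 = h := by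
      rw [Tterm, Rprod, Finset.range_zero, Finset.prod_empty, twistIter_zero, mul_one]
    rw [sPartial_eq]
    simp [twist_eq_map, h0]
  | succ N ih =>
    have hsp : sPartial F n h (N + 1) = sPartial F n h N + Tterm F n h N := by
      rw [sPartial_eq, sPartial_eq, Finset.sum_range_succ]
    have tadd : twist F (sPartial F n h N + Tterm F n h N)
        = twist F (sPartial F n h N) + twist F (Tterm F n h N) := by
      simp [twist_eq_map]
    rw [hsp, tadd, twist_Tterm]
    linear_combination ih

end Aux5
/-- Let `n ≥ 0` and `h ∈ K∞⟨t⟩` with `‖h‖ < 1`.  Then the series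
`s_h = h + ∑_{i≥1} h⁽ⁱ⁾ ∏_{j=0}^{i−1} (t−θ^{qʲ})^{−n}` converges in `K∞⟨t⟩`, and its sum
satisfies `s_h − (t−θ)^{−n} s_h⁽¹⁾ = h`. -/
theorem statement8 (q n : ℕ) (hq : q = Fintype.card F)
    (h : TS F) (hh : IsTate F h) (hnorm : gnorm F h < 1) :
    ∃ s : TS F, IsTate F s ∧ TT F (sPartial F n h) s ∧
      s - ((tt F - th F) ^ n)⁻¹ * twist F s = h := by
  clear hq
  have hD : Dge 1 h := fun k => HD_one_of_Kabs_lt_one (lt_of_le_of_lt (Kabs_le_gnorm h k) hnorm)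
  refine ⟨sLim F n h hD, ?_, ?_, ?_⟩
  · -- `s` is Tate
    unfold IsTate
    rw [ENNReal.tendsto_nhds_zero]
    intro ε hε
    obtain ⟨B, hB⟩ := exists_card_zpow_le (F := F) hε
    have hsp : IsTate F (sPartial F n h B) := by
      rw [sPartial_eq]
      exact IsTate_sum fun i _ => IsTate_Tterm n hh hD i
    have hdiff : ∀ k, Kabs (Fintype.card F)
        (coeffT F k (sLim F n h hD - sPartial F n h B)) ≤ ε := by
      intro k
      refine le_trans (Kabs_le_of_HD ((Dge_sLim_sub n h hD B) k)) ?_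
      refine le_trans (ENNReal.zpow_le_of_le cardE_one_le ?_) (hB B le_rfl)
      have h2 : B ≤ Fintype.card F ^ B := le_of_lt (lt_card_pow B)
      have h3 : ((B:ℤ)) ≤ ((Fintype.card F ^ B : ℕ) : ℤ) := by exact_mod_cast h2
      omega
    have hspε := (ENNReal.tendsto_nhds_zero.mp hsp) ε hε
    filter_upwards [hspε] with k hk
    have hdec : coeffT F k (sLim F n h hD) =
        coeffT F k (sLim F n h hD - sPartial F n h B) + coeffT F k (sPartial F n h B) := by
      rw [← coeffT_add]
      congr 1
      ring
    rw [hdec]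
    exact le_trans (Kabs_add_le _ _) (max_le (hdiff k) hk)
  · -- convergence of the partial sums to `s`
    unfold TT
    rw [ENNReal.tendsto_nhds_zero]
    intro ε hε
    obtain ⟨B, hB⟩ := exists_card_zpow_le (F := F) hε
    rw [Filter.eventually_atTop]
    refine ⟨B, fun N hN => ?_⟩
    refine le_trans (gnorm_le_of_Dge (Dge_sLim_sub n h hD N)) ?_
    refine le_trans (ENNReal.zpow_le_of_le cardE_one_le ?_) (hB N hN)
    have h2 : N ≤ Fintype.card F ^ N := le_of_lt (lt_card_pow N)
    have h3 : ((N:ℤ)) ≤ ((Fintype.card F ^ N : ℕ) : ℤ) := by exact_mod_cast h2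
    omega
  · -- the functional equation
    set s := sLim F n h hD with hs
    have hfac : (tt F - th F) ^ n * invFactor F 1 ^ n = 1 := by
      rw [← mul_pow]
      have h1 : tt F - th F = tt F - PowerSeries.C (R := Kinf F) (theta F ^ 1) := by rw [pow_one, th]
      rw [h1, factor_mul_invFactor, one_pow]
    have hDV : Dge (-(n:ℤ)) ((tt F - th F) ^ n) := by
      have hX : Dge 0 (tt F) := by
        intro k
        show HD 0 (PowerSeries.coeff k (tt F))
        rw [tt, PowerSeries.coeff_X]
        split
        · rw [← HahnSeries.single_zero_one]; exact HD_single le_rfl 1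
        · exact HD_zero 0
      have hth : Dge (-1) (th F) := by
        intro k
        show HD (-1) (PowerSeries.coeff k (th F))
        rw [th, PowerSeries.coeff_C]
        split
        · rw [theta]; exact HD_single le_rfl 1
        · exact HD_zero _
      exact ((hX.mono (by omega)).sub hth).pow_linear n
    have hW : ∀ N : ℕ, Dge (((Fintype.card F ^ N : ℕ) : ℤ) - n)
        ((tt F - th F) ^ n * s - twist F s - (tt F - th F) ^ n * h) := by
      intro N
      have e1 : (tt F - th F) ^ n * s - twist F s - (tt F - th F) ^ n * h
          = (tt F - th F) ^ n * (s - sPartial F n h N)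
            - twist F (s - sPartial F n h N)
            - (tt F - th F) ^ n * Tterm F n h N := by
        rw [twist_sub]
        linear_combination beta_sPartial n h N
      rw [e1]
      have d1 := hDV.mul (Dge_sLim_sub n h hD N)
      have d2 := (Dge_sLim_sub n h hD N).twist (by positivity)
      have d3 := hDV.mul (Dge_Tterm n hD N)
      have hc : (0:ℤ) ≤ ((Fintype.card F ^ N : ℕ) : ℤ) := by positivity
      exact ((d1.mono (by omega)).sub (d2.mono (by omega))).sub (d3.mono (by omega))
    have hW0 : (tt F - th F) ^ n * s - twist F s - (tt F - th F) ^ n * h = 0 := by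
      refine PowerSeries.ext fun k => ?_
      rw [map_zero]
      refine HahnSeries.coeff_injective (funext fun g => ?_)
      rw [HahnSeries.coeff_zero]
      set N := (g + n).toNat + 1 with hN
      refine hW N k g ?_
      have h2 : N < Fintype.card F ^ N := lt_card_pow N
      have h3 : g + n ≤ ((g + n).toNat : ℤ) := Int.self_le_toNat _
      have h5 : ((N : ℕ) : ℤ) < ((Fintype.card F ^ N : ℕ) : ℤ) := by exact_mod_cast h2
      omega
    have key : (tt F - th F) ^ n * s - twist F s = (tt F - th F) ^ n * h := by
      linear_combination hW0
    have hUV : ((tt F - th F) ^ n)⁻¹ = invFactor F 1 ^ n := psInv_eq hfac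
    rw [hUV]
    linear_combination invFactor F 1 ^ n * key + (h - s) * hfac

end Carlitz
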